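/- Let (G, v) be a pre-odd-hole centered at v with sectors P_1,…,P_k. Then the graph G^+(v) (the link of v in co(G)) contains an odd hole, namely the cyclic sequence obtained by traversing the paths P_1,…,P_k in order is an induced cycle of odd length at least 5 in G^+(v). -/

import Mathlib

open Finset

def holeOff {k : ℕ} (n : Fin k → ℕ) (i : ℕ) : ℕ :=
  ∑ j ∈ Finset.range i, (if h : j < k then n ⟨j, h⟩ else 0)

lemma holeOff_mono {k : ℕ} (n : Fin k → ℕ) {i j : ℕ} (h : i ≤ j) :
    holeOff n i ≤ holeOff n j :=
  Finset.sum_le_sum_of_subset (Finset.range_subset_range.2 h)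

lemma holeOff_succ {k : ℕ} (n : Fin k → ℕ) (i : Fin k) :
    holeOff n (i.val + 1) = holeOff n i.val + n i := by
  rw [holeOff, Finset.sum_range_succ, dif_pos i.isLt]
  rfl

lemma holeOff_k {k : ℕ} (n : Fin k → ℕ) : holeOff n k = ∑ i : Fin k, n i := by
  rw [holeOff, ← Fin.sum_univ_eq_sum_range fun j => if h : j < k then n ⟨j, h⟩ else 0]
  exact Finset.sum_congr rfl fun i _ => by rw [dif_pos i.isLt]

lemma holeG_lt {k : ℕ} (n : Fin k → ℕ) (i : Fin k) (s : Fin (n i)) :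
    holeOff n i.val + s.val < ∑ i : Fin k, n i := by
  calc holeOff n i.val + s.val < holeOff n i.val + n i := by omega
  _ = holeOff n (i.val + 1) := (holeOff_succ n i).symm
  _ ≤ holeOff n k := holeOff_mono n i.isLt
  _ = _ := holeOff_k n

lemma holeG_lt' {k : ℕ} (n : Fin k → ℕ) {i j : Fin k} (h : i.val < j.val) (s : Fin (n i)) :
    holeOff n i.val + s.val < holeOff n j.val := by
  calc holeOff n i.val + s.val < holeOff n i.val + n i := by omega
  _ = holeOff n (i.val + 1) := (holeOff_succ n i).symm
  _ ≤ holeOff n j.val := holeOff_mono n h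

lemma holeG_inj {k : ℕ} (n : Fin k → ℕ) {i j : Fin k} {s : Fin (n i)} {t : Fin (n j)}
    (h : holeOff n i.val + s.val = holeOff n j.val + t.val) : i = j ∧ s.val = t.val := by
  rcases lt_trichotomy i.val j.val with hlt | heq | hgt
  · exact absurd h (by have := holeG_lt' n hlt s; omega)
  · have : i = j := Fin.ext heq
    subst this
    exact ⟨rfl, by omega⟩
  · exact absurd h.symm (by have := holeG_lt' n hgt t; omega)

lemma holeOff_zero {k : ℕ} (n : Fin k → ℕ) : holeOff n 0 = 0 := rfl

lemma holeOff_pos {k : ℕ} (n : Fin k → ℕ) (hn : ∀ i, 0 < n i) (hk : 0 < k)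
    {j : ℕ} (hj : 0 < j) : 0 < holeOff n j := by
  have h1 := holeOff_succ n ⟨0, hk⟩
  have h2 := holeOff_mono n (show 0 + 1 ≤ j by omega)
  have := hn ⟨0, hk⟩
  simp only [holeOff_zero] at h1
  omega

lemma holeSucc {k : ℕ} (n : Fin k → ℕ) (hn : ∀ i, 0 < n i) (i j : Fin k)
    (s : Fin (n i)) (t : Fin (n j)) :
    (holeOff n i.val + s.val + 1) % (∑ i : Fin k, n i) = holeOff n j.val + t.val ↔
      ((i = j ∧ s.val + 1 = t.val) ∨
        (j.val = (i.val + 1) % k ∧ s.val = n i - 1 ∧ t.val = 0)) := by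
  have hk : 0 < k := i.pos
  have hni := hn i
  have hnj := hn j
  have hti := t.isLt
  have hsi := s.isLt
  by_cases hs : s.val + 1 < n i
  · have h1 : holeOff n i.val + s.val + 1 < ∑ i : Fin k, n i := by
      have := holeG_lt n i ⟨s.val + 1, hs⟩; simp only at this; omega
    rw [Nat.mod_eq_of_lt h1]
    constructor
    · intro h
      have h2 := holeG_inj n (s := (⟨s.val + 1, hs⟩ : Fin (n i))) (t := t)
        (by simp only; omega)
      left; exact ⟨h2.1, by simpa using h2.2⟩
    · rintro (⟨rfl, h⟩ | ⟨h1', h2', h3'⟩)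
      · omega
      · omega
  · have hs' : s.val + 1 = n i := by omega
    have hoff : holeOff n i.val + s.val + 1 = holeOff n (i.val + 1) := by
      rw [holeOff_succ]; omega
    by_cases hik : i.val + 1 < k
    · have h1 : holeOff n (i.val + 1) < ∑ i : Fin k, n i := by
        have := holeG_lt n ⟨i.val + 1, hik⟩ ⟨0, hn _⟩; simp only at this; omega
      rw [hoff, Nat.mod_eq_of_lt h1]
      constructor
      · intro h
        have h2 := holeG_inj n (i := (⟨i.val + 1, hik⟩ : Fin k))
          (s := (⟨0, hn _⟩ : Fin (n ⟨i.val + 1, hik⟩))) (t := t) (by simp only; omega)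
        have h3 : j.val = i.val + 1 := by rw [← h2.1]
        right
        refine ⟨by rw [Nat.mod_eq_of_lt hik]; omega, by omega, by simpa using h2.2.symm⟩
      · rintro (⟨rfl, h⟩ | ⟨h1', h2', h3'⟩)
        · omega
        · rw [Nat.mod_eq_of_lt hik] at h1'
          have : j.val = i.val + 1 := by omega
          have : holeOff n j.val = holeOff n (i.val + 1) := by rw [this]
          omega
    · have hik' : i.val + 1 = k := by have := i.isLt; omega
      have hm : holeOff n i.val + s.val + 1 = ∑ i : Fin k, n i := by
        rw [hoff, hik', holeOff_k]
      rw [hm, Nat.mod_self]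
      have hjz : holeOff n j.val = 0 → j.val = 0 := by
        intro h
        by_contra hc
        have := holeOff_pos n hn hk (j := j.val) (by omega)
        omega
      constructor
      · intro h
        have ht0 : t.val = 0 := by omega
        have hj0 : j.val = 0 := hjz (by omega)
        right
        refine ⟨?_, by omega, ht0⟩
        rw [hik', Nat.mod_self]; omega
      · rintro (⟨rfl, h⟩ | ⟨h1', h2', h3'⟩)
        · omega
        · rw [hik', Nat.mod_self] at h1'
          have hj0 : j.val = 0 := h1'
          have : holeOff n j.val = 0 := by rw [hj0]; rfl
          omega

/-- Adjacency in the graph `G⁺(v)` (the link of `v` in the cocycle `co(G)`), for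
vertices `x, y` distinct from `v` and from each other: adjacent iff both are
neighbors of `v` and adjacent in `G`, or both non-neighbors of `v` and adjacent in
`G`, or exactly one is a neighbor of `v` and they are non-adjacent in `G`. -/
def plusAdj {V : Type*} (G : SimpleGraph V) (v x y : V) : Prop :=
  (G.Adj v x ∧ G.Adj v y ∧ G.Adj x y) ∨
  (¬G.Adj v x ∧ ¬G.Adj v y ∧ G.Adj x y) ∨
  (G.Adj v x ∧ ¬G.Adj v y ∧ ¬G.Adj x y) ∨
  (¬G.Adj v x ∧ G.Adj v y ∧ ¬G.Adj x y)

lemma plusAdj_same {V : Type*} {G : SimpleGraph V} {v x y : V}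
    (h : G.Adj v x ↔ G.Adj v y) : plusAdj G v x y ↔ G.Adj x y := by
  unfold plusAdj; tauto

lemma plusAdj_diff {V : Type*} {G : SimpleGraph V} {v x y : V}
    (h : ¬(G.Adj v x ↔ G.Adj v y)) : plusAdj G v x y ↔ ¬G.Adj x y := by
  unfold plusAdj; tauto


/-- If `(G, v)` is a pre-odd-hole centered at `v` with sectors `P 0, …, P (k-1)`
(each `P i` an induced path `p i 0, …, p i (n i - 1)` of `G`, the sectors partitioning
`V(G) \ {v}`, with `N(v)` the union of the sectors of odd index, no edges between
distinct sectors of equal parity, all edges between sectors of different parity that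
are not cyclically consecutive, and between cyclically consecutive sectors all edges
except that the last vertex of a sector is non-adjacent to the first vertex of the
next — with the appropriate variant when `k = 2`), then the graph `G⁺(v)` contains an
odd hole: traversing the sectors in order yields an induced cycle of odd length at
least 5 in `G⁺(v)` through all the vertices other than `v`. -/
theorem stmt19 {V : Type*} [Fintype V] [DecidableEq V] (G : SimpleGraph V) (v : V)
    (heven : Even (Fintype.card V)) (hbig : 6 ≤ Fintype.card V)
    (k : ℕ) (hkeven : Even k) (hkpos : 0 < k)
    (P : Fin k → Finset V)
    (n : Fin k → ℕ) (hn : ∀ i, 0 < n i)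
    (p : (i : Fin k) → Fin (n i) → V)
    (hpinj : ∀ i, Function.Injective (p i))
    (hP : ∀ i, P i = Finset.image (p i) Finset.univ)
    (hnv : ∀ i, v ∉ P i)
    (hpart : ∀ x : V, x ≠ v → ∃! i, x ∈ P i)
    (hpath : ∀ i, ∀ a b : Fin (n i),
      (G.Adj (p i a) (p i b) ↔ (a.val + 1 = b.val ∨ b.val + 1 = a.val)))
    (hNv : ∀ i, ∀ x ∈ P i, (G.Adj v x ↔ Odd i.val))
    (hsame : ∀ i j : Fin k, i ≠ j → (Even i.val ↔ Even j.val) →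
      ∀ x ∈ P i, ∀ y ∈ P j, ¬ G.Adj x y)
    (hfar : ∀ i j : Fin k, ¬(Even i.val ↔ Even j.val) →
      j.val ≠ (i.val + 1) % k → i.val ≠ (j.val + 1) % k →
      ∀ x ∈ P i, ∀ y ∈ P j, G.Adj x y)
    (hconsec : 2 < k → ∀ i j : Fin k, j.val = (i.val + 1) % k →
      (¬ G.Adj (p i ⟨n i - 1, Nat.sub_lt (hn i) Nat.one_pos⟩) (p j ⟨0, hn j⟩)) ∧
      ∀ a : Fin (n i), ∀ b : Fin (n j), (a.val ≠ n i - 1 ∨ b.val ≠ 0) →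
        G.Adj (p i a) (p j b))
    (hk2 : k = 2 → ∀ i j : Fin k, i ≠ j →
      (¬ G.Adj (p i ⟨n i - 1, Nat.sub_lt (hn i) Nat.one_pos⟩) (p j ⟨0, hn j⟩)) ∧
      ∀ a : Fin (n i), ∀ b : Fin (n j),
        (a.val ≠ n i - 1 ∨ b.val ≠ 0) → (a.val ≠ 0 ∨ b.val ≠ n j - 1) →
        G.Adj (p i a) (p j b)) :
    ∃ m : ℕ, Odd m ∧ 5 ≤ m ∧ m = Fintype.card V - 1 ∧
      ∃ c : Fin m → V, Function.Injective c ∧ (∀ a, c a ≠ v) ∧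
        (∀ x : V, x ≠ v → ∃ a, c a = x) ∧
        ∀ a b : Fin m, plusAdj G v (c a) (c b) ↔
          ((a.val + 1) % m = b.val ∨ (b.val + 1) % m = a.val) := by
  have hk2' : 2 ≤ k := by
    rcases hkeven with ⟨r, hr⟩; omega
  set m : ℕ := ∑ i : Fin k, n i with hm
  -- the block concatenation map
  have hginj : Function.Injective
      (fun z : (i : Fin k) × Fin (n i) =>
        (⟨holeOff n z.1.val + z.2.val, holeG_lt n z.1 z.2⟩ : Fin m)) := by
    rintro ⟨i, s⟩ ⟨j, t⟩ h
    simp only [Fin.mk.injEq] at h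
    obtain ⟨rfl, h2⟩ := holeG_inj n h
    rw [show s = t from Fin.ext h2]
  have hcards : Fintype.card ((i : Fin k) × Fin (n i)) = Fintype.card (Fin m) := by
    rw [Fintype.card_sigma, Fintype.card_fin]
    exact Finset.sum_congr rfl fun i _ => Fintype.card_fin _
  have hgbij := (Fintype.bijective_iff_injective_and_card _).2 ⟨hginj, hcards⟩
  set e := Equiv.ofBijective _ hgbij with he
  set c : Fin m → V := fun a => p (e.symm a).1 (e.symm a).2 with hc
  have hmem : ∀ (i : Fin k) (s : Fin (n i)), p i s ∈ P i := fun i s => by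
    rw [hP]; exact Finset.mem_image_of_mem _ (Finset.mem_univ s)
  have hpnev : ∀ (i : Fin k) (s : Fin (n i)), p i s ≠ v := fun i s hv =>
    hnv i (hv ▸ hmem i s)
  have huniq : ∀ (i j : Fin k) (s : Fin (n i)) (t : Fin (n j)), p i s = p j t → i = j := by
    intro i j s t h
    obtain ⟨u, _, huu⟩ := hpart (p i s) (hpnev i s)
    have h1 := huu i (hmem i s)
    have h2 := huu j (by rw [h]; exact hmem j t)
    rw [h1, h2]
  have hzinj : ∀ (z w : (i : Fin k) × Fin (n i)), p z.1 z.2 = p w.1 w.2 → z = w := by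
    rintro ⟨i, s⟩ ⟨j, t⟩ h
    obtain rfl := huniq i j s t h
    obtain rfl := hpinj i h
    rfl
  have hcinj : Function.Injective c := by
    intro a b h
    exact e.symm.injective (hzinj _ _ h)
  have hcnev : ∀ a, c a ≠ v := fun a => hpnev _ _
  have hcsurj : ∀ x : V, x ≠ v → ∃ a, c a = x := by
    intro x hx
    obtain ⟨i, hi, -⟩ := hpart x hx
    rw [hP] at hi
    obtain ⟨s, -, rfl⟩ := Finset.mem_image.1 hi
    refine ⟨e ⟨i, s⟩, ?_⟩
    show p (e.symm (e ⟨i, s⟩)).1 (e.symm (e ⟨i, s⟩)).2 = p i s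
    rw [e.symm_apply_apply]
  -- cardinality
  have hcard : m = Fintype.card V - 1 := by
    have hEq : Fintype.card (Fin m) = Fintype.card {x : V // x ≠ v} :=
      Fintype.card_congr (Equiv.ofBijective (fun a => ⟨c a, hcnev a⟩)
        ⟨fun a b h => hcinj (congrArg Subtype.val h),
         fun ⟨x, hx⟩ => by obtain ⟨a, ha⟩ := hcsurj x hx; exact ⟨a, Subtype.ext ha⟩⟩)
    have : Fintype.card {x : V // x ≠ v} = Fintype.card V - 1 := by
      simp [Fintype.card_subtype_compl, Fintype.card_subtype_eq]
    rw [Fintype.card_fin] at hEq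
    omega
  have hvadj : ∀ (i : Fin k) (s : Fin (n i)), (G.Adj v (p i s) ↔ Odd i.val) :=
    fun i s => hNv i _ (hmem i s)
  have hvv : ∀ (i j : Fin k) (s : Fin (n i)) (t : Fin (n j)),
      ((G.Adj v (p i s) ↔ G.Adj v (p j t)) ↔ (Even i.val ↔ Even j.val)) := by
    intro i j s t
    rw [hvadj, hvadj, ← Nat.not_even_iff_odd, ← Nat.not_even_iff_odd]
    exact not_iff_not
  have hplus_same : ∀ {x y : V}, (G.Adj v x ↔ G.Adj v y) →
      (plusAdj G v x y ↔ G.Adj x y) := fun h => plusAdj_same h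
  have hplus_diff : ∀ {x y : V}, ¬(G.Adj v x ↔ G.Adj v y) →
      (plusAdj G v x y ↔ ¬G.Adj x y) := fun h => plusAdj_diff h
  have hne : ∀ i : Fin k, i.val ≠ (i.val + 1) % k := by
    intro i
    by_cases h : i.val + 1 < k
    · rw [Nat.mod_eq_of_lt h]; omega
    · have hik : i.val + 1 = k := by have := i.isLt; omega
      rw [hik, Nat.mod_self]; omega
  have hcp : ∀ i j : Fin k, j.val = (i.val + 1) % k → ¬(Even i.val ↔ Even j.val) := by
    intro i j h
    have hkm := Nat.even_iff.1 hkeven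
    rw [Nat.even_iff, Nat.even_iff]
    by_cases hik : i.val + 1 < k
    · rw [Nat.mod_eq_of_lt hik] at h; omega
    · have hik' : i.val + 1 = k := by have := i.isLt; omega
      rw [hik', Nat.mod_self] at h; omega
  -- the core adjacency characterization
  have key : ∀ (i j : Fin k) (s : Fin (n i)) (t : Fin (n j)),
      plusAdj G v (p i s) (p j t) ↔
        (((i = j ∧ s.val + 1 = t.val) ∨
          (j.val = (i.val + 1) % k ∧ s.val = n i - 1 ∧ t.val = 0)) ∨
         ((j = i ∧ t.val + 1 = s.val) ∨
          (i.val = (j.val + 1) % k ∧ t.val = n j - 1 ∧ s.val = 0))) := by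
    intro i j s t
    by_cases hij : i = j
    · subst hij
      rw [hplus_same ((hvv i i s t).2 Iff.rfl), hpath i s t]
      have h1 := hne i
      constructor
      · rintro (h | h)
        · exact Or.inl (Or.inl ⟨rfl, h⟩)
        · exact Or.inr (Or.inl ⟨rfl, h⟩)
      · rintro ((⟨-, h⟩ | ⟨h, -⟩) | (⟨-, h⟩ | ⟨h, -⟩))
        · exact Or.inl h
        · exact absurd h h1
        · exact Or.inr h
        · exact absurd h h1
    · by_cases hpar : (Even i.val ↔ Even j.val)
      · have hnadj := hsame i j hij hpar (p i s) (hmem i s) (p j t) (hmem j t)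
        rw [hplus_same ((hvv i j s t).2 hpar)]
        constructor
        · intro h; exact absurd h hnadj
        · rintro ((⟨h, -⟩ | ⟨h, -, -⟩) | (⟨h, -⟩ | ⟨h, -, -⟩))
          · exact absurd h hij
          · exact absurd hpar (hcp i j h)
          · exact absurd h.symm hij
          · exact absurd hpar.symm (hcp j i h)
      · rw [hplus_diff (fun hcon => hpar ((hvv i j s t).1 hcon))]
        by_cases hk2c : k = 2
        · subst hk2c
          have hiv := i.isLt
          have hjv := j.isLt
          have hijv : i.val ≠ j.val := fun h => hij (Fin.ext h)
          have hc1 : j.val = (i.val + 1) % 2 := by omega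
          have hc2 : i.val = (j.val + 1) % 2 := by omega
          obtain ⟨hna, hall⟩ := hk2 rfl i j hij
          obtain ⟨hna', -⟩ := hk2 rfl j i (Ne.symm hij)
          constructor
          · intro hnadj
            by_cases h1 : s.val = n i - 1 ∧ t.val = 0
            · exact Or.inl (Or.inr ⟨hc1, h1.1, h1.2⟩)
            · by_cases h2 : s.val = 0 ∧ t.val = n j - 1
              · exact Or.inr (Or.inr ⟨hc2, h2.2, h2.1⟩)
              · exact absurd (hall s t (by omega) (by omega)) hnadj
          · rintro ((⟨h, -⟩ | ⟨-, h1, h2⟩) | (⟨h, -⟩ | ⟨-, h1, h2⟩))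
            · exact absurd h hij
            · rw [show s = ⟨n i - 1, Nat.sub_lt (hn i) Nat.one_pos⟩ from Fin.ext h1,
                show t = ⟨0, hn j⟩ from Fin.ext h2]
              exact hna
            · exact absurd h.symm hij
            · rw [show s = ⟨0, hn i⟩ from Fin.ext h2,
                show t = ⟨n j - 1, Nat.sub_lt (hn j) Nat.one_pos⟩ from Fin.ext h1]
              exact fun hadj => hna' hadj.symm
        · have hk3 : 2 < k := by omega
          by_cases hc1 : j.val = (i.val + 1) % k
          · have hc2 : i.val ≠ (j.val + 1) % k := by
              intro hc2
              by_cases h : i.val + 1 < k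
              · rw [Nat.mod_eq_of_lt h] at hc1
                by_cases h' : j.val + 1 < k
                · rw [Nat.mod_eq_of_lt h'] at hc2; omega
                · have hjk : j.val + 1 = k := by have := j.isLt; omega
                  rw [hjk, Nat.mod_self] at hc2; omega
              · have hik : i.val + 1 = k := by have := i.isLt; omega
                rw [hik, Nat.mod_self] at hc1
                have h1k : j.val + 1 < k := by omega
                rw [Nat.mod_eq_of_lt h1k] at hc2; omega
            obtain ⟨hna, hall⟩ := hconsec hk3 i j hc1
            constructor
            · intro hnadj
              by_cases h1 : s.val = n i - 1 ∧ t.val = 0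
              · exact Or.inl (Or.inr ⟨hc1, h1.1, h1.2⟩)
              · exact absurd (hall s t (by omega)) hnadj
            · rintro ((⟨h, -⟩ | ⟨-, h1, h2⟩) | (⟨h, -⟩ | ⟨h, -, -⟩))
              · exact absurd h hij
              · rw [show s = ⟨n i - 1, Nat.sub_lt (hn i) Nat.one_pos⟩ from Fin.ext h1,
                  show t = ⟨0, hn j⟩ from Fin.ext h2]
                exact hna
              · exact absurd h.symm hij
              · exact absurd h hc2
          · by_cases hc2 : i.val = (j.val + 1) % k
            · obtain ⟨hna, hall⟩ := hconsec hk3 j i hc2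
              constructor
              · intro hnadj
                by_cases h1 : t.val = n j - 1 ∧ s.val = 0
                · exact Or.inr (Or.inr ⟨hc2, h1.1, h1.2⟩)
                · exact absurd (hall t s (by omega)).symm hnadj
              · rintro ((⟨h, -⟩ | ⟨h, -, -⟩) | (⟨h, -⟩ | ⟨-, h1, h2⟩))
                · exact absurd h hij
                · exact absurd h hc1
                · exact absurd h.symm hij
                · rw [show t = ⟨n j - 1, Nat.sub_lt (hn j) Nat.one_pos⟩ from Fin.ext h1,
                    show s = ⟨0, hn i⟩ from Fin.ext h2]
                  exact fun hadj => hna hadj.symm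
            · have hadj := hfar i j hpar hc1 hc2 (p i s) (hmem i s) (p j t) (hmem j t)
              constructor
              · intro h; exact absurd hadj h
              · rintro ((⟨h, -⟩ | ⟨h, -, -⟩) | (⟨h, -⟩ | ⟨h, -, -⟩))
                · exact absurd h hij
                · exact absurd h hc1
                · exact absurd h.symm hij
                · exact absurd h hc2
  refine ⟨m, ?_, by omega, hcard, c, hcinj, hcnev, hcsurj, ?_⟩
  · rcases heven with ⟨r, hr⟩
    exact ⟨r - 1, by omega⟩
  · intro a b
    have ha : holeOff n (e.symm a).1.val + (e.symm a).2.val = a.val :=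
      congrArg Fin.val (e.apply_symm_apply a)
    have hb : holeOff n (e.symm b).1.val + (e.symm b).2.val = b.val :=
      congrArg Fin.val (e.apply_symm_apply b)
    have hsa : ((a.val + 1) % m = b.val) ↔
        (((e.symm a).1 = (e.symm b).1 ∧ (e.symm a).2.val + 1 = (e.symm b).2.val) ∨
          ((e.symm b).1.val = ((e.symm a).1.val + 1) % k ∧
            (e.symm a).2.val = n (e.symm a).1 - 1 ∧ (e.symm b).2.val = 0)) := by
      rw [← ha, ← hb]
      exact holeSucc n hn (e.symm a).1 (e.symm b).1 (e.symm a).2 (e.symm b).2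
    have hsb : ((b.val + 1) % m = a.val) ↔
        (((e.symm b).1 = (e.symm a).1 ∧ (e.symm b).2.val + 1 = (e.symm a).2.val) ∨
          ((e.symm a).1.val = ((e.symm b).1.val + 1) % k ∧
            (e.symm b).2.val = n (e.symm b).1 - 1 ∧ (e.symm a).2.val = 0)) := by
      rw [← ha, ← hb]
      exact holeSucc n hn (e.symm b).1 (e.symm a).1 (e.symm b).2 (e.symm a).2
    rw [hc]
    rw [key (e.symm a).1 (e.symm b).1 (e.symm a).2 (e.symm b).2, hsa, hsb]
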